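/- Let Λ be a Poisson tensor homogeneous of degree -1 with respect to Δ (i.e. [Δ,Λ]=-Λ), and let Γ be a vector field homogeneous of degree k with respect to Δ (i.e. [Δ,Γ]=kΓ) satisfying [Γ,Λ]=0. Then J = (Λ + Γ∧Δ, Γ) is a Jacobi structure. -/
import Mathlib


/-- Abstract model of the graded commutative algebra `A(E)` of multivector fields /
multisections of a Lie algebroid, equipped with the wedge product and the
Schouten–Nijenhuis bracket (sign convention: graded Lie bracket for the degree
shifted by one).  `H p X` means `X` is homogeneous of (multivector) degree `p`. -/
structure SchoutenAlgebra (V : Type*) [AddCommGroup V] [Module ℝ V] where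
  wedge : V →ₗ[ℝ] V →ₗ[ℝ] V
  bracket : V →ₗ[ℝ] V →ₗ[ℝ] V
  H : ℤ → V → Prop
  one : V
  h_one : H 0 one
  wedge_one : ∀ X : V, wedge one X = X
  wedge_assoc : ∀ X Y Z : V, wedge (wedge X Y) Z = wedge X (wedge Y Z)
  wedge_comm : ∀ {p q : ℤ} {X Y : V}, H p X → H q Y →
    wedge X Y = (Int.negOnePow (p * q) : ℤ) • wedge Y X
  wedge_mem : ∀ {p q : ℤ} {X Y : V}, H p X → H q Y → H (p + q) (wedge X Y)
  bracket_mem : ∀ {p q : ℤ} {X Y : V}, H p X → H q Y → H (p + q - 1) (bracket X Y)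
  bracket_antisymm : ∀ {p q : ℤ} {X Y : V}, H p X → H q Y →
    bracket X Y = -((Int.negOnePow ((p - 1) * (q - 1)) : ℤ) • bracket Y X)
  bracket_jacobi : ∀ {p q : ℤ} {X Y : V}, H p X → H q Y → ∀ Z : V,
    bracket (bracket X Y) Z =
      bracket X (bracket Y Z) -
        (Int.negOnePow ((p - 1) * (q - 1)) : ℤ) • bracket Y (bracket X Z)
  bracket_leibniz : ∀ {p q : ℤ} {X Y : V}, H p X → H q Y → ∀ Z : V,
    bracket X (wedge Y Z) =
      wedge (bracket X Y) Z + (Int.negOnePow ((p - 1) * q) : ℤ) • wedge Y (bracket X Z)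

/-- If `Λ` is a Poisson tensor homogeneous of degree `-1` w.r.t. `Δ`
(`[[Δ,Λ]] = -Λ`) and `Γ` is a vector field homogeneous of degree `k`
(`[[Δ,Γ]] = kΓ`) with `[[Γ,Λ]] = 0`, then `J = (Λ + Γ∧Δ, Γ)` is a Jacobi
structure: `[[Γ, Λ+Γ∧Δ]] = 0` and `[[Λ+Γ∧Δ, Λ+Γ∧Δ]] = -2 Γ∧(Λ+Γ∧Δ)`. -/
theorem jacobi_pair_of_homogeneous {V : Type*} [AddCommGroup V] [Module ℝ V]
    (S : SchoutenAlgebra V) (Λ Γ Δ : V) (k : ℤ)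
    (hΛ : S.H 2 Λ) (hΓ : S.H 1 Γ) (hΔ : S.H 1 Δ)
    (hPoisson : S.bracket Λ Λ = 0)
    (hHom : S.bracket Δ Λ = -Λ)
    (hΓhom : S.bracket Δ Γ = k • Γ)
    (hΓΛ : S.bracket Γ Λ = 0) :
    S.bracket Γ (Λ + S.wedge Γ Δ) = 0 ∧
      S.bracket (Λ + S.wedge Γ Δ) (Λ + S.wedge Γ Δ) =
        -((2 : ℤ) • S.wedge Γ (Λ + S.wedge Γ Δ)) := by

  have e0 : (Int.negOnePow 0 : ℤ) = 1 := by decide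
  have e1 : (Int.negOnePow 1 : ℤ) = -1 := by decide
  -- Γ∧Γ = 0
  have hΓΓ : S.wedge Γ Γ = 0 := by
    have h := S.wedge_comm hΓ hΓ
    norm_num [e1] at h
    have h2 : S.wedge Γ Γ = (2:ℝ)⁻¹ • ((2:ℝ) • S.wedge Γ Γ) := by
      rw [smul_smul]; norm_num
    rw [two_smul] at h2
    nth_rewrite 3 [h] at h2
    simpa using h2
  -- [Γ,Γ] = 0 and [Δ,Δ] = 0
  have hbΓΓ : S.bracket Γ Γ = 0 := by
    have h := S.bracket_antisymm hΓ hΓ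
    norm_num [e0] at h
    have h2 : S.bracket Γ Γ = (2:ℝ)⁻¹ • ((2:ℝ) • S.bracket Γ Γ) := by
      rw [smul_smul]; norm_num
    rw [two_smul] at h2
    nth_rewrite 3 [h] at h2
    simpa using h2
  have hbΔΔ : S.bracket Δ Δ = 0 := by
    have h := S.bracket_antisymm hΔ hΔ
    norm_num [e0] at h
    have h2 : S.bracket Δ Δ = (2:ℝ)⁻¹ • ((2:ℝ) • S.bracket Δ Δ) := by
      rw [smul_smul]; norm_num
    rw [two_smul] at h2
    nth_rewrite 3 [h] at h2
    simpa using h2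
  -- Γ∧(Γ∧Δ) = 0
  have hΓΓΔ : S.wedge Γ (S.wedge Γ Δ) = 0 := by
    rw [← S.wedge_assoc, hΓΓ]
    simp
  -- [Γ,Δ] = -(k•Γ)
  have hΓΔ : S.bracket Γ Δ = -(k • Γ) := by
    have h := S.bracket_antisymm hΓ hΔ
    norm_num [e0] at h
    rw [h, hΓhom]
  -- [Γ, Γ∧Δ] = 0
  have h1 : S.bracket Γ (S.wedge Γ Δ) = 0 := by
    have h := S.bracket_leibniz hΓ hΓ Δ
    norm_num [e0, hbΓΓ, hΓΔ] at h
    rw [h, hΓΓ]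
    simp
  -- degree of W = Γ∧Δ
  have hW : S.H 2 (S.wedge Γ Δ) := by
    have := S.wedge_mem hΓ hΔ
    norm_num at this
    exact this
  -- [Λ,Γ] = 0 and [Λ,Δ] = Λ
  have hΛΓ : S.bracket Λ Γ = 0 := by
    have h := S.bracket_antisymm hΛ hΓ
    norm_num [e0, hΓΛ] at h
    exact h
  have hΛΔ : S.bracket Λ Δ = Λ := by
    have h := S.bracket_antisymm hΛ hΔ
    norm_num [e0, hHom] at h
    exact h
  -- [Λ, Γ∧Δ] = -(Γ∧Λ)
  have hΛW : S.bracket Λ (S.wedge Γ Δ) = -(S.wedge Γ Λ) := by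
    have h := S.bracket_leibniz hΛ hΓ Δ
    norm_num [e1, hΛΓ, hΛΔ] at h
    simpa using h
  -- [Γ∧Δ, Λ] = -(Γ∧Λ)
  have hWΛ : S.bracket (S.wedge Γ Δ) Λ = -(S.wedge Γ Λ) := by
    have h := S.bracket_antisymm hW hΛ
    norm_num [e1, hΛW] at h
    exact h
  -- [Δ, Γ∧Δ] = k•(Γ∧Δ)
  have hΔW : S.bracket Δ (S.wedge Γ Δ) = k • S.wedge Γ Δ := by
    have h := S.bracket_leibniz hΔ hΓ Δ
    norm_num [e0, hΓhom, hbΔΔ] at h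
    rw [h]
  -- [Γ∧Δ, Δ] = -(k•(Γ∧Δ))
  have hWΔ : S.bracket (S.wedge Γ Δ) Δ = -(k • S.wedge Γ Δ) := by
    have h := S.bracket_antisymm hW hΔ
    norm_num [e0, hΔW] at h
    exact h
  -- [Γ∧Δ, Γ∧Δ] = 0
  have hWW : S.bracket (S.wedge Γ Δ) (S.wedge Γ Δ) = 0 := by
    have hWΓ : S.bracket (S.wedge Γ Δ) Γ = 0 := by
      have h := S.bracket_antisymm hW hΓ
      norm_num [e0, h1] at h
      exact h
    have h := S.bracket_leibniz hW hΓ Δ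
    norm_num [e1, hWΓ, hWΔ] at h
    rw [h, hΓΓΔ]
    simp
  constructor
  · rw [map_add, hΓΛ, h1, add_zero]
  · simp only [map_add, LinearMap.add_apply, hPoisson, hΛW, hWΛ, hWW, hΓΓΔ,
      add_zero, zero_add, two_smul]
    abel
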